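/- Suppose a sequence (x_m, y_m) of points of ℝ² is generated by alternating exact coordinate minimization of h: for every m, x_{m+1} minimizes the map x ↦ h(x, y_m) over ℝ, and y_{m+1} minimizes the map y ↦ h(x_{m+1}, y) over ℝ. Then there exists a subsequence (x_{m_k}, y_{m_k}) converging to a point (x̂, ŷ) ∈ ℝ² that is a stationary point of h, i.e., the gradient of h vanishes at (x̂, ŷ). (Proposition 2 of the paper.) -/

import Mathlib

open Matrix Filter

/-- The objective function `h` from the paper, as a function on `ℝ × ℝ`. -/
noncomputable def hfun {N : ℕ} (S : Matrix (Fin N) (Fin N) ℝ) (z1 z2 v1 v2 : Fin N → ℝ)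
    (p : ℝ × ℝ) : ℝ :=
  (1 + (z1 - (p.1 • v1 - p.2 • v2)) ⬝ᵥ (S⁻¹ *ᵥ (z1 - (p.1 • v1 - p.2 • v2)))) *
  (1 + (z2 - (p.1 • v2 + p.2 • v1)) ⬝ᵥ (S⁻¹ *ᵥ (z2 - (p.1 • v2 + p.2 • v1)))) -
  ((z1 - (p.1 • v1 - p.2 • v2)) ⬝ᵥ (S⁻¹ *ᵥ (z2 - (p.1 • v2 + p.2 • v1)))) ^ 2

section Aux

variable {N : ℕ}

/-- Differentiability of `hfun`. -/
lemma hfun_differentiable (S : Matrix (Fin N) (Fin N) ℝ) (z1 z2 v1 v2 : Fin N → ℝ) :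
    Differentiable ℝ (hfun S z1 z2 v1 v2) := by
  unfold hfun
  simp only [Matrix.mulVec, dotProduct, Pi.sub_apply, Pi.add_apply, Pi.smul_apply,
    smul_eq_mul]
  fun_prop

/-- Symmetry of the bilinear form of a real symmetric matrix. -/
lemma symB {M : Matrix (Fin N) (Fin N) ℝ} (hM : M.IsHermitian) (u w : Fin N → ℝ) :
    u ⬝ᵥ (M *ᵥ w) = w ⬝ᵥ (M *ᵥ u) := by
  have hMt : Mᵀ = M := by
    have := hM.eq
    rwa [conjTranspose_eq_transpose_of_trivial] at this
  rw [Matrix.dotProduct_mulVec, ← hMt, Matrix.vecMul_transpose, hMt, dotProduct_comm]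

lemma qnonneg {M : Matrix (Fin N) (Fin N) ℝ} (hM : M.PosDef) (u : Fin N → ℝ) :
    0 ≤ u ⬝ᵥ (M *ᵥ u) := by
  simpa using hM.posSemidef.dotProduct_mulVec_nonneg u

/-- Cauchy–Schwarz for the bilinear form of a positive definite matrix. -/
lemma CS {M : Matrix (Fin N) (Fin N) ℝ} (hM : M.PosDef) (u w : Fin N → ℝ) :
    (u ⬝ᵥ (M *ᵥ w)) ^ 2 ≤ (u ⬝ᵥ (M *ᵥ u)) * (w ⬝ᵥ (M *ᵥ w)) := by
  have key : ∀ t : ℝ, 0 ≤ (w ⬝ᵥ (M *ᵥ w)) * (t * t) + (2 * (u ⬝ᵥ (M *ᵥ w))) * t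
      + (u ⬝ᵥ (M *ᵥ u)) := by
    intro t
    have h0 : 0 ≤ (u + t • w) ⬝ᵥ (M *ᵥ (u + t • w)) := qnonneg hM _
    have hexp : (u + t • w) ⬝ᵥ (M *ᵥ (u + t • w))
        = (w ⬝ᵥ (M *ᵥ w)) * (t * t) + (2 * (u ⬝ᵥ (M *ᵥ w))) * t + (u ⬝ᵥ (M *ᵥ u)) := by
      rw [Matrix.mulVec_add, Matrix.mulVec_smul, dotProduct_add, add_dotProduct,
        add_dotProduct, dotProduct_smul, smul_dotProduct, smul_dotProduct, dotProduct_smul,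
        symB hM.isHermitian w u]
      simp [smul_eq_mul]; ring
    linarith [hexp ▸ h0]
  have := discrim_le_zero key
  rw [discrim] at this
  nlinarith [this]

/-- A positive definite quadratic form dominates a multiple of the Euclidean square norm. -/
lemma quadLB (hN : 1 ≤ N) {M : Matrix (Fin N) (Fin N) ℝ} (hM : M.PosDef) :
    ∃ ε : ℝ, 0 < ε ∧ ∀ u : Fin N → ℝ, ε * (∑ i, u i ^ 2) ≤ u ⬝ᵥ (M *ᵥ u) := by
  set K : Set (Fin N → ℝ) := {u | ∑ i, u i ^ 2 = 1} with hK
  have hcont : Continuous fun u : Fin N → ℝ => u ⬝ᵥ (M *ᵥ u) := by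
    simp only [Matrix.mulVec, dotProduct]
    fun_prop
  have hcontE : Continuous fun u : Fin N → ℝ => ∑ i, u i ^ 2 := by fun_prop
  have hKc : IsCompact K := by
    have hclosed : IsClosed K := isClosed_eq hcontE continuous_const
    have hbd : Bornology.IsBounded K := by
      apply Metric.isBounded_iff_subset_closedBall 0 |>.2
      refine ⟨1, fun u hu => ?_⟩
      simp only [Metric.mem_closedBall, dist_zero_right]
      rw [pi_norm_le_iff_of_nonneg (by norm_num)]
      intro i
      have h1 : u i ^ 2 ≤ 1 := by
        have h2 := Finset.single_le_sum (f := fun j => u j ^ 2)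
          (fun j _ => sq_nonneg (u j)) (Finset.mem_univ i)
        have hu' : ∑ j, u j ^ 2 = 1 := hu
        simpa [hu'] using h2
      rw [Real.norm_eq_abs]
      nlinarith [abs_nonneg (u i), sq_abs (u i)]
    exact Metric.isCompact_of_isClosed_isBounded hclosed hbd
  have hKne : K.Nonempty := by
    refine ⟨Pi.single ⟨0, hN⟩ 1, ?_⟩
    simp [hK, Pi.single_apply]
  obtain ⟨u0, hu0K, hu0min⟩ := hKc.exists_isMinOn hKne hcont.continuousOn
  have hu0ne : u0 ≠ 0 := by
    intro h
    rw [h] at hu0K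
    simp [hK] at hu0K
  refine ⟨u0 ⬝ᵥ (M *ᵥ u0), by simpa using hM.dotProduct_mulVec_pos hu0ne, fun u => ?_⟩
  rcases eq_or_ne u 0 with rfl | hu
  · simp
  · have hEpos : (0:ℝ) < ∑ i, u i ^ 2 := by
      obtain ⟨i, hi⟩ := Function.ne_iff.1 hu
      exact Finset.sum_pos' (fun j _ => sq_nonneg _)
        ⟨i, Finset.mem_univ i, by simpa using pow_pos (abs_pos.2 hi) 2 |>.trans_eq (sq_abs _)⟩
    set r : ℝ := Real.sqrt (∑ i, u i ^ 2) with hr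
    have hrpos : 0 < r := Real.sqrt_pos.2 hEpos
    have hr2 : r ^ 2 = ∑ i, u i ^ 2 := Real.sq_sqrt hEpos.le
    set w : Fin N → ℝ := r⁻¹ • u with hw
    have hwK : w ∈ K := by
      simp only [hK, Set.mem_setOf_eq, hw, Pi.smul_apply, smul_eq_mul, mul_pow]
      rw [← Finset.mul_sum, ← hr2]
      field_simp
    have hmin := hu0min hwK
    have hQw : w ⬝ᵥ (M *ᵥ w) = r⁻¹ ^ 2 * (u ⬝ᵥ (M *ᵥ u)) := by
      rw [hw, Matrix.mulVec_smul, dotProduct_smul, smul_dotProduct]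
      simp [smul_eq_mul]; ring
    have : u0 ⬝ᵥ (M *ᵥ u0) ≤ r⁻¹ ^ 2 * (u ⬝ᵥ (M *ᵥ u)) := by
      simpa [hQw] using hmin
    have hr2pos : (0:ℝ) < r ^ 2 := by positivity
    calc (u0 ⬝ᵥ (M *ᵥ u0)) * (∑ i, u i ^ 2) = (u0 ⬝ᵥ (M *ᵥ u0)) * r ^ 2 := by rw [hr2]
      _ ≤ (r⁻¹ ^ 2 * (u ⬝ᵥ (M *ᵥ u))) * r ^ 2 := by nlinarith
      _ = u ⬝ᵥ (M *ᵥ u) := by field_simp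


/-- Coercive lower bound for `hfun`. -/
lemma hfun_ge (S : Matrix (Fin N) (Fin N) ℝ) (hS : S.PosDef) (z1 z2 v1 v2 : Fin N → ℝ)
    (ε : ℝ) (hε : 0 < ε)
    (hquad : ∀ u : Fin N → ℝ, ε * (∑ i, u i ^ 2) ≤ u ⬝ᵥ (S⁻¹ *ᵥ u)) (p : ℝ × ℝ) :
    1 + ε * ((p.1 ^ 2 + p.2 ^ 2) * ((∑ i, v1 i ^ 2) + ∑ i, v2 i ^ 2) / 2
      - ((∑ i, z1 i ^ 2) + ∑ i, z2 i ^ 2)) ≤ hfun S z1 z2 v1 v2 p := by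
  have hSinv : (S⁻¹).PosDef := hS.inv
  have hcs := CS hSinv (z1 - (p.1 • v1 - p.2 • v2)) (z2 - (p.1 • v2 + p.2 • v1))
  have hq1 := qnonneg hSinv (z1 - (p.1 • v1 - p.2 • v2))
  have hq2 := qnonneg hSinv (z2 - (p.1 • v2 + p.2 • v1))
  have he1 := hquad (z1 - (p.1 • v1 - p.2 • v2))
  have he2 := hquad (z2 - (p.1 • v2 + p.2 • v1))
  have hw : (∑ i, (p.1 • v1 - p.2 • v2) i ^ 2) + (∑ i, (p.1 • v2 + p.2 • v1) i ^ 2)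
      = (p.1 ^ 2 + p.2 ^ 2) * ((∑ i, v1 i ^ 2) + ∑ i, v2 i ^ 2) := by
    rw [← Finset.sum_add_distrib, ← Finset.sum_add_distrib, Finset.mul_sum]
    exact Finset.sum_congr rfl fun i _ => by
      simp only [Pi.sub_apply, Pi.add_apply, Pi.smul_apply, smul_eq_mul]; ring
  have hlb1 : (∑ i, (p.1 • v1 - p.2 • v2) i ^ 2) / 2 - (∑ i, z1 i ^ 2)
      ≤ ∑ i, (z1 - (p.1 • v1 - p.2 • v2)) i ^ 2 := by
    rw [Finset.sum_div, ← Finset.sum_sub_distrib]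
    refine Finset.sum_le_sum fun i _ => ?_
    simp only [Pi.sub_apply]
    nlinarith [sq_nonneg (2 * z1 i - ((p.1 • v1) i - (p.2 • v2) i))]
  have hlb2 : (∑ i, (p.1 • v2 + p.2 • v1) i ^ 2) / 2 - (∑ i, z2 i ^ 2)
      ≤ ∑ i, (z2 - (p.1 • v2 + p.2 • v1)) i ^ 2 := by
    rw [Finset.sum_div, ← Finset.sum_sub_distrib]
    refine Finset.sum_le_sum fun i _ => ?_
    simp only [Pi.sub_apply, Pi.add_apply]
    nlinarith [sq_nonneg (2 * z2 i - ((p.1 • v2) i + (p.2 • v1) i))]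
  have hsum : (p.1 ^ 2 + p.2 ^ 2) * ((∑ i, v1 i ^ 2) + ∑ i, v2 i ^ 2) / 2
      - ((∑ i, z1 i ^ 2) + ∑ i, z2 i ^ 2)
      ≤ (∑ i, (z1 - (p.1 • v1 - p.2 • v2)) i ^ 2)
        + ∑ i, (z2 - (p.1 • v2 + p.2 • v1)) i ^ 2 := by
    linarith [hw, hlb1, hlb2]
  have hmul := mul_le_mul_of_nonneg_left hsum hε.le
  unfold hfun
  nlinarith [hmul, hcs, hq1, hq2, he1, he2]

end Aux

/-- Proposition 2: an alternating exact coordinate minimization sequence for `h`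
admits a subsequence converging to a stationary point of `h`. -/
theorem hfun_alternating_min_subseq_stationary {N : ℕ} (hN : 1 ≤ N)
    (S : Matrix (Fin N) (Fin N) ℝ) (hS : S.PosDef)
    (z1 z2 v1 v2 : Fin N → ℝ) (hv : (v1, v2) ≠ (0, 0))
    (x y : ℕ → ℝ)
    (hx : ∀ m : ℕ, ∀ t : ℝ,
      hfun S z1 z2 v1 v2 (x (m+1), y m) ≤ hfun S z1 z2 v1 v2 (t, y m))
    (hy : ∀ m : ℕ, ∀ t : ℝ,
      hfun S z1 z2 v1 v2 (x (m+1), y (m+1)) ≤ hfun S z1 z2 v1 v2 (x (m+1), t)) :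
    ∃ (φ : ℕ → ℕ) (p : ℝ × ℝ), StrictMono φ ∧
      Tendsto (fun k => (x (φ k), y (φ k))) atTop (nhds p) ∧
      fderiv ℝ (hfun S z1 z2 v1 v2) p = 0 := by
  obtain ⟨f, hf⟩ : ∃ f, f = hfun S z1 z2 v1 v2 := ⟨_, rfl⟩
  have hx' : ∀ m : ℕ, ∀ t : ℝ, f (x (m+1), y m) ≤ f (t, y m) := by rw [hf]; exact hx
  have hy' : ∀ m : ℕ, ∀ t : ℝ, f (x (m+1), y (m+1)) ≤ f (x (m+1), t) := by rw [hf]; exact hy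
  have hdiff : Differentiable ℝ f := hf ▸ hfun_differentiable S z1 z2 v1 v2
  have hcontf : Continuous f := hdiff.continuous
  obtain ⟨ε, hε, hquad⟩ := quadLB hN hS.inv
  obtain ⟨E, hE⟩ : ∃ E : ℝ, E = (∑ i, z1 i ^ 2) + (∑ i, z2 i ^ 2) := ⟨_, rfl⟩
  obtain ⟨V, hV⟩ : ∃ V : ℝ, V = (∑ i, v1 i ^ 2) + (∑ i, v2 i ^ 2) := ⟨_, rfl⟩
  have hVpos : 0 < V := by
    have h1 : (0:ℝ) ≤ ∑ i, v1 i ^ 2 := Finset.sum_nonneg fun i _ => sq_nonneg _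
    have h2 : (0:ℝ) ≤ ∑ i, v2 i ^ 2 := Finset.sum_nonneg fun i _ => sq_nonneg _
    have hne : v1 ≠ 0 ∨ v2 ≠ 0 := by
      by_contra h
      push_neg at h
      exact hv (by simp [h.1, h.2])
    have key : ∀ v : Fin N → ℝ, v ≠ 0 → (0:ℝ) < ∑ i, v i ^ 2 := by
      intro v hvne
      obtain ⟨i, hi⟩ := Function.ne_iff.1 hvne
      exact Finset.sum_pos' (fun j _ => sq_nonneg _)
        ⟨i, Finset.mem_univ i, by simpa using pow_pos (abs_pos.2 hi) 2 |>.trans_eq (sq_abs _)⟩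
    rw [hV]
    rcases hne with h | h
    · linarith [key v1 h]
    · linarith [key v2 h]
  have hlow : ∀ p : ℝ × ℝ, 1 + ε * ((p.1 ^ 2 + p.2 ^ 2) * V / 2 - E) ≤ f p := by
    intro p
    rw [hf, hE, hV]
    exact hfun_ge S hS z1 z2 v1 v2 ε hε hquad p
  -- monotone decrease of the objective values
  obtain ⟨c, hc⟩ : ∃ c : ℕ → ℝ, c = fun m => f (x m, y m) := ⟨_, rfl⟩
  have hc_anti : Antitone c := by
    apply antitone_nat_of_succ_le
    intro m
    rw [hc]
    calc f (x (m+1), y (m+1)) ≤ f (x (m+1), y m) := hy' m (y m)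
      _ ≤ f (x m, y m) := hx' m (x m)
  -- the sequence (x (m+1), y (m+1)) is bounded
  obtain ⟨D, hD⟩ : ∃ D : ℝ, D = (c 0 - 1 + ε * E) * 2 / (ε * V) := ⟨_, rfl⟩
  obtain ⟨R, hR⟩ : ∃ R : ℝ, R = Real.sqrt (max 0 D) := ⟨_, rfl⟩
  have hqmem : ∀ m, (x (m+1), y (m+1)) ∈ Metric.closedBall (0 : ℝ × ℝ) R := by
    intro m
    have h1 : f (x (m+1), y (m+1)) ≤ c 0 := by
      have h := hc_anti (Nat.zero_le (m+1))
      rw [hc]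
      simpa [hc] using h
    have h2 := hlow (x (m+1), y (m+1))
    simp only at h2
    have hεV : 0 < ε * V := mul_pos hε hVpos
    have hD2 : (x (m+1)) ^ 2 + (y (m+1)) ^ 2 ≤ D := by
      rw [hD, le_div_iff₀ hεV]
      nlinarith
    have habs : ∀ a : ℝ, a ^ 2 ≤ D → |a| ≤ R := by
      intro a ha
      rw [hR, ← Real.sqrt_sq_eq_abs]
      exact Real.sqrt_le_sqrt (le_max_of_le_right ha)
    have hx2 : (x (m+1)) ^ 2 ≤ D := by nlinarith [sq_nonneg (y (m+1))]
    have hy2 : (y (m+1)) ^ 2 ≤ D := by nlinarith [sq_nonneg (x (m+1))]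
    simp only [Metric.mem_closedBall, dist_zero_right, Prod.norm_def, Real.norm_eq_abs]
    exact max_le (habs _ hx2) (habs _ hy2)
  obtain ⟨phat, _, ψ, hψ, hconv⟩ :=
    tendsto_subseq_of_bounded (Metric.isBounded_closedBall (x := (0:ℝ×ℝ)) (r := R)) hqmem
  have hφ : StrictMono (fun k => ψ k + 1) := fun a b hab => Nat.succ_lt_succ (hψ hab)
  have hconv' : Tendsto (fun k => (x (ψ k + 1), y (ψ k + 1))) atTop (nhds phat) := by
    exact hconv
  refine ⟨fun k => ψ k + 1, phat, hφ, hconv', ?_⟩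
  -- convergence of objective values
  have hbdd : BddBelow (Set.range c) := by
    refine ⟨1 - ε * E, ?_⟩
    rintro _ ⟨m, rfl⟩
    have h2 := hlow (x m, y m)
    simp only at h2
    have hnn : (0:ℝ) ≤ ((x m) ^ 2 + (y m) ^ 2) * V / 2 := by positivity
    have h3 : ε * (0 - E) ≤ ε * (((x m) ^ 2 + (y m) ^ 2) * V / 2 - E) := by
      apply mul_le_mul_of_nonneg_left _ hε.le
      linarith
    rw [hc]
    nlinarith
  obtain ⟨L, hLdef⟩ : ∃ L : ℝ, L = ⨅ m, c m := ⟨_, rfl⟩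
  have hcL : Tendsto c atTop (nhds L) := hLdef ▸ tendsto_atTop_ciInf hc_anti hbdd
  have hsub : Tendsto (fun k => c (ψ k + 1)) atTop (nhds L) := hcL.comp hφ.tendsto_atTop
  have htoFp : Tendsto (fun k => c (ψ k + 1)) atTop (nhds (f phat)) := by
    rw [hc]
    exact (hcontf.tendsto phat).comp hconv'
  have hLp : f phat = L := tendsto_nhds_unique htoFp hsub
  have hsub1 : Tendsto (fun k => c (ψ k + 1 + 1)) atTop (nhds L) :=
    hcL.comp ((tendsto_add_atTop_nat 1).comp hφ.tendsto_atTop)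
  have hg : Tendsto (fun k => f (x (ψ k + 1 + 1), y (ψ k + 1))) atTop (nhds L) := by
    refine tendsto_of_tendsto_of_tendsto_of_le_of_le hsub1 hsub ?_ ?_
    · intro k
      rw [hc]
      exact hy' (ψ k + 1) (y (ψ k + 1))
    · intro k
      rw [hc]
      exact hx' (ψ k + 1) (x (ψ k + 1))
  have hxconv : Tendsto (fun k => x (ψ k + 1)) atTop (nhds phat.1) :=
    (continuous_fst.tendsto phat).comp hconv'
  have hyconv : Tendsto (fun k => y (ψ k + 1)) atTop (nhds phat.2) :=
    (continuous_snd.tendsto phat).comp hconv'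
  have hxmin : ∀ t : ℝ, f phat ≤ f (t, phat.2) := by
    intro t
    have hRt : Tendsto (fun k => f (t, y (ψ k + 1))) atTop (nhds (f (t, phat.2))) :=
      (hcontf.tendsto _).comp (tendsto_const_nhds.prodMk_nhds hyconv)
    rw [hLp]
    exact le_of_tendsto_of_tendsto' hg hRt (fun k => hx' (ψ k + 1) t)
  have hymin : ∀ t : ℝ, f phat ≤ f (phat.1, t) := by
    intro t
    have hRt : Tendsto (fun k => f (x (ψ k + 1), t)) atTop (nhds (f (phat.1, t))) :=
      (hcontf.tendsto _).comp (hxconv.prodMk_nhds tendsto_const_nhds)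
    rw [hLp]
    have hineq : ∀ k, c (ψ k + 1) ≤ f (x (ψ k + 1), t) := by
      intro k
      rw [hc]
      exact hy' (ψ k) t
    exact le_of_tendsto_of_tendsto' hsub hRt hineq
  -- stationarity
  have hd : DifferentiableAt ℝ f phat := hdiff phat
  have dirzero : ∀ w : ℝ × ℝ, (∀ t : ℝ, f phat ≤ f (phat + t • w)) → fderiv ℝ f phat w = 0 := by
    intro w hw
    have hpt : phat + (0:ℝ) • w = phat := by simp
    have hline : HasDerivAt (fun t : ℝ => phat + t • w) w 0 := by
      simpa using ((hasDerivAt_id (0:ℝ)).smul_const w).const_add phat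
    have hcomp : HasDerivAt (fun t : ℝ => f (phat + t • w)) (fderiv ℝ f phat w) 0 := by
      have hd' : HasFDerivAt f (fderiv ℝ f phat) (phat + (0:ℝ) • w) := by
        rw [hpt]; exact hd.hasFDerivAt
      have h := hd'.comp_hasDerivAt 0 hline
      exact h
    have hmin : IsLocalMin (fun t : ℝ => f (phat + t • w)) 0 := by
      apply Filter.Eventually.of_forall
      intro t
      simpa [hpt] using hw t
    exact hmin.hasDerivAt_eq_zero hcomp
  have h10 : fderiv ℝ f phat ((1:ℝ), (0:ℝ)) = 0 := by
    apply dirzero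
    intro t
    have heq : phat + t • ((1:ℝ), (0:ℝ)) = (phat.1 + t, phat.2) := by
      simp [Prod.ext_iff]
    rw [heq]
    exact hxmin (phat.1 + t)
  have h01 : fderiv ℝ f phat ((0:ℝ), (1:ℝ)) = 0 := by
    apply dirzero
    intro t
    have heq : phat + t • ((0:ℝ), (1:ℝ)) = (phat.1, phat.2 + t) := by
      simp [Prod.ext_iff]
    rw [heq]
    exact hymin (phat.2 + t)
  rw [← hf]
  apply ContinuousLinearMap.ext
  intro w
  have hdecomp : w = w.1 • ((1:ℝ), (0:ℝ)) + w.2 • ((0:ℝ), (1:ℝ)) := by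
    simp [Prod.ext_iff]
  rw [hdecomp, map_add, (fderiv ℝ f phat).map_smul, (fderiv ℝ f phat).map_smul, h10, h01]
  simp
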